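/- For any a ∈ ℝⁿ with all entries strictly positive, X(a)Ŷ(a) − Y(a)X̂(a) > 0. -/

import Mathlib

open Finset

/-- The `k`-th elementary symmetric polynomial of `a : Fin n → ℝ`. -/
noncomputable def esymm (n k : ℕ) (a : Fin n → ℝ) : ℝ :=
  ∑ s ∈ Finset.powersetCard k (Finset.univ : Finset (Fin n)), ∏ i ∈ s, a i

/-- The `k`-th elementary symmetric polynomial of `a` with the `i`-th entry removed. -/
noncomputable def esymmDel (n k : ℕ) (a : Fin n → ℝ) (i : Fin n) : ℝ :=
  ∑ s ∈ Finset.powersetCard k ((Finset.univ : Finset (Fin n)).erase i), ∏ j ∈ s, a j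


/-- X(λ) = Σ_{0≤2j≤n} (−1)^j σ_{2j}(λ). -/
noncomputable def Xpoly (n : ℕ) (a : Fin n → ℝ) : ℝ :=
  ∑ j ∈ Finset.range (n / 2 + 1), (-1 : ℝ) ^ j * esymm n (2 * j) a

/-- Y(λ) = Σ_{0≤2j+1≤n} (−1)^j σ_{2j+1}(λ). -/
noncomputable def Ypoly (n : ℕ) (a : Fin n → ℝ) : ℝ :=
  ∑ j ∈ Finset.range ((n + 1) / 2), (-1 : ℝ) ^ j * esymm n (2 * j + 1) a

/-- X̂(λ) = Σ_{0≤2j≤n} (−1)^j (2j) σ_{2j}(λ). -/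
noncomputable def Xhat (n : ℕ) (a : Fin n → ℝ) : ℝ :=
  ∑ j ∈ Finset.range (n / 2 + 1), (-1 : ℝ) ^ j * (2 * j : ℝ) * esymm n (2 * j) a

/-- Ŷ(λ) = Σ_{0≤2j+1≤n} (−1)^j (2j+1) σ_{2j+1}(λ). -/
noncomputable def Yhat (n : ℕ) (a : Fin n → ℝ) : ℝ :=
  ∑ j ∈ Finset.range ((n + 1) / 2), (-1 : ℝ) ^ j * (2 * j + 1 : ℝ) * esymm n (2 * j + 1) a

/-- The Lagrangian phase H(λ) = Σ arctan λ_i. -/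
noncomputable def phaseH (n : ℕ) (a : Fin n → ℝ) : ℝ :=
  ∑ i, Real.arctan (a i)

section aux

lemma aux_prod_one_add {n : ℕ} (a : Fin n → ℝ) (s : Finset (Fin n)) :
    ∏ i ∈ s, (1 + (a i : ℂ) * Complex.I)
      = ∑ k ∈ Finset.range (s.card + 1), Complex.I ^ k *
          ∑ t ∈ Finset.powersetCard k s, ∏ j ∈ t, (a j : ℂ) := by
  have h := Finset.prod_add (fun i => (a i : ℂ) * Complex.I) (fun _ => (1 : ℂ)) s
  simp only [Finset.prod_const_one, mul_one] at h
  rw [show (fun i => (a i : ℂ) * Complex.I + 1) = (fun i => 1 + (a i : ℂ) * Complex.I) by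
        funext i; ring] at h
  rw [h, Finset.powerset_card_disjiUnion]
  refine (Finset.sum_disjiUnion _ _ _).trans ?_
  refine Finset.sum_congr rfl fun k _ => ?_
  rw [Finset.mul_sum]
  refine Finset.sum_congr rfl fun t ht => ?_
  rw [Finset.prod_mul_distrib, Finset.prod_const, (Finset.mem_powersetCard.mp ht).2]
  ring

lemma aux_parity_split (c : ℕ → ℂ) (n : ℕ) :
    ∑ k ∈ Finset.range (n + 1), Complex.I ^ k * c k
      = (∑ j ∈ Finset.range (n / 2 + 1), (-1 : ℂ) ^ j * c (2 * j))
        + (∑ j ∈ Finset.range ((n + 1) / 2), (-1 : ℂ) ^ j * c (2 * j + 1)) * Complex.I := by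
  induction n with
  | zero => simp
  | succ n ih =>
    rw [Finset.sum_range_succ, ih]
    rcases Nat.even_or_odd (n + 1) with ⟨m, hm⟩ | ⟨m, hm⟩
    · have h1 : (n + 1) / 2 + 1 = m + 1 := by omega
      have h2 : n / 2 + 1 = m := by omega
      have h3 : (n + 1 + 1) / 2 = (n + 1) / 2 := by omega
      have h4 : Complex.I ^ (n + 1) = (-1 : ℂ) ^ m := by
        rw [show n + 1 = 2 * m by omega, pow_mul, Complex.I_sq]
      rw [h1, h3, h2, h4]
      conv_rhs => rw [Finset.sum_range_succ]
      rw [show 2 * m = n + 1 by omega, show m = n / 2 + 1 by omega]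
      ring
    · have h1 : (n + 1) / 2 + 1 = n / 2 + 1 := by omega
      have h2 : (n + 1 + 1) / 2 = m + 1 := by omega
      have h3 : (n + 1) / 2 = m := by omega
      have h4 : Complex.I ^ (n + 1) = (-1 : ℂ) ^ m * Complex.I := by
        rw [show n + 1 = 2 * m + 1 by omega, pow_succ, pow_mul, Complex.I_sq]
      rw [h1, h2, h3, h4,
        Finset.sum_range_succ (fun j => (-1 : ℂ) ^ j * c (2 * j + 1)) m]
      rw [show 2 * m + 1 = n + 1 by omega]
      ring

lemma aux_sum_mul_esymmDel (n k : ℕ) (a : Fin n → ℝ) :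
    ∑ i, a i * esymmDel n k a i = (k + 1 : ℝ) * esymm n (k + 1) a := by
  have lhs_eq : ∑ i, a i * esymmDel n k a i
      = ∑ x ∈ (Finset.univ : Finset (Fin n)).sigma
          (fun i => Finset.powersetCard k (Finset.univ.erase i)),
          ∏ j ∈ insert x.1 x.2, a j := by
    rw [Finset.sum_sigma]
    refine Finset.sum_congr rfl fun i _ => ?_
    rw [esymmDel, Finset.mul_sum]
    refine Finset.sum_congr rfl fun s hs => ?_
    rw [Finset.prod_insert]
    intro hi
    exact (Finset.mem_erase.mp ((Finset.mem_powersetCard.mp hs).1 hi)).1 rfl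
  have rhs_eq : (k + 1 : ℝ) * esymm n (k + 1) a
      = ∑ x ∈ (Finset.powersetCard (k + 1) (Finset.univ : Finset (Fin n))).sigma
          (fun t => t), ∏ j ∈ x.1, a j := by
    rw [Finset.sum_sigma, esymm, Finset.mul_sum]
    refine Finset.sum_congr rfl fun t ht => ?_
    show _ = ∑ _s ∈ t, ∏ j ∈ t, a j
    rw [Finset.sum_const, (Finset.mem_powersetCard.mp ht).2, nsmul_eq_mul]
    push_cast
    ring
  rw [lhs_eq, rhs_eq]
  refine Finset.sum_nbij' (fun x => ⟨insert x.1 x.2, x.1⟩)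
    (fun y => ⟨y.2, y.1.erase y.2⟩) ?_ ?_ ?_ ?_ ?_
  · rintro ⟨i, s⟩ hx
    simp only [Finset.mem_sigma, Finset.mem_powersetCard] at hx ⊢
    refine ⟨⟨Finset.subset_univ _, ?_⟩, Finset.mem_insert_self _ _⟩
    rw [Finset.card_insert_of_notMem, hx.2.2]
    intro hi
    exact (Finset.mem_erase.mp (hx.2.1 hi)).1 rfl
  · rintro ⟨t, i⟩ hy
    simp only [Finset.mem_sigma, Finset.mem_powersetCard] at hy ⊢
    refine ⟨Finset.mem_univ _, fun j hj => Finset.mem_erase.mpr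
      ⟨(Finset.mem_erase.mp hj).1, Finset.mem_univ _⟩, ?_⟩
    rw [Finset.card_erase_of_mem hy.2, hy.1.2]
    omega
  · rintro ⟨i, s⟩ hx
    simp only [Finset.mem_sigma, Finset.mem_powersetCard] at hx
    have : i ∉ s := fun hi => (Finset.mem_erase.mp (hx.2.1 hi)).1 rfl
    simp [Finset.erase_insert this]
  · rintro ⟨t, i⟩ hy
    simp only [Finset.mem_sigma, Finset.mem_powersetCard] at hy
    simp [Finset.insert_erase hy.2]
  · rintro ⟨i, s⟩ _
    rfl

end aux

/-- For a with all entries positive, X(a)Ŷ(a) − Y(a)X̂(a) > 0. -/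
theorem XYhat_sub_YXhat_pos (n : ℕ) (hn : 0 < n) (a : Fin n → ℝ) (ha : ∀ i, 0 < a i) :
    0 < Xpoly n a * Yhat n a - Ypoly n a * Xhat n a := by
  set z : Fin n → ℂ := fun i => 1 + (a i : ℂ) * Complex.I with hz
  set P : ℂ := ∏ i, z i with hP
  set Q : ℂ := ∑ i, (a i : ℂ) * Complex.I * ∏ j ∈ Finset.univ.erase i, z j with hQ
  -- casts of esymm / esymmDel
  have esymm_cast : ∀ k, ((esymm n k a : ℝ) : ℂ)
      = ∑ t ∈ Finset.powersetCard k (Finset.univ : Finset (Fin n)), ∏ j ∈ t, (a j : ℂ) := by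
    intro k; rw [esymm]; push_cast; rfl
  -- P = X + Y I
  have P_eq : P = (Xpoly n a : ℂ) + (Ypoly n a : ℂ) * Complex.I := by
    rw [hP, hz]
    rw [aux_prod_one_add a Finset.univ]
    rw [Finset.card_univ, Fintype.card_fin]
    rw [show (fun k => Complex.I ^ k *
          ∑ t ∈ Finset.powersetCard k (Finset.univ : Finset (Fin n)), ∏ j ∈ t, (a j : ℂ))
        = fun k => Complex.I ^ k * ((esymm n k a : ℝ) : ℂ) by
      funext k; rw [esymm_cast]]
    rw [aux_parity_split (fun k => ((esymm n k a : ℝ) : ℂ)) n]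
    congr 1
    · rw [Xpoly]; push_cast; rfl
    · congr 1; rw [Ypoly]; push_cast; rfl
  -- Q = Xhat + Yhat I
  have erase_card : ∀ i : Fin n, (Finset.univ.erase i).card = n - 1 := by
    intro i
    rw [Finset.card_erase_of_mem (Finset.mem_univ i), Finset.card_univ, Fintype.card_fin]
  have Q_eq : Q = (Xhat n a : ℂ) + (Yhat n a : ℂ) * Complex.I := by
    have step1 : Q = ∑ k ∈ Finset.range n, Complex.I ^ (k + 1) *
        ((((k : ℝ) + 1) * esymm n (k + 1) a : ℝ) : ℂ) := by
      rw [hQ]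
      have : ∀ i : Fin n, (a i : ℂ) * Complex.I * ∏ j ∈ Finset.univ.erase i, z j
          = ∑ k ∈ Finset.range n, Complex.I ^ (k + 1) *
              ((a i : ℂ) * ((esymmDel n k a i : ℝ) : ℂ)) := by
        intro i
        rw [hz, aux_prod_one_add a (Finset.univ.erase i), erase_card i,
          Nat.sub_add_cancel hn, Finset.mul_sum]
        refine Finset.sum_congr rfl fun k _ => ?_
        rw [esymmDel]
        push_cast
        ring
      rw [Finset.sum_congr rfl (fun i _ => this i), Finset.sum_comm]
      refine Finset.sum_congr rfl fun k _ => ?_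
      rw [← Finset.mul_sum]
      congr 1
      rw [← aux_sum_mul_esymmDel n k a]
      push_cast
      rfl
    have step2 : Q = ∑ m ∈ Finset.range (n + 1), Complex.I ^ m *
        ((m : ℂ) * ((esymm n m a : ℝ) : ℂ)) := by
      rw [Finset.sum_range_succ' (fun m => Complex.I ^ m *
        ((m : ℂ) * ((esymm n m a : ℝ) : ℂ))) n]
      simp only [Nat.cast_zero, zero_mul, mul_zero, add_zero]
      rw [step1]
      refine Finset.sum_congr rfl fun k _ => ?_
      push_cast
      ring
    rw [step2, aux_parity_split (fun m => (m : ℂ) * ((esymm n m a : ℝ) : ℂ)) n]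
    congr 1
    · rw [Xhat]; push_cast; exact Finset.sum_congr rfl fun x _ => by ring
    · congr 1; rw [Yhat]; push_cast; exact Finset.sum_congr rfl fun x _ => by ring
  -- the imaginary part of conj P * Q, computed two ways
  have hzconj : ∀ j, z j * (starRingEnd ℂ) (z j) = ((1 + (a j) ^ 2 : ℝ) : ℂ) := by
    intro j
    rw [hz]
    rw [show ((1 + a j ^ 2 : ℝ) : ℂ) = 1 + (a j : ℂ) ^ 2 by push_cast; rfl]
    rw [map_add, map_mul, map_one, Complex.conj_ofReal, Complex.conj_I]
    ring_nf
    rw [Complex.I_sq]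
    ring
  have im_eq : ((starRingEnd ℂ) P * Q).im
      = ∑ i, a i * ∏ j ∈ Finset.univ.erase i, (1 + (a j) ^ 2) := by
    rw [hQ, Finset.mul_sum, Complex.im_sum]
    refine Finset.sum_congr rfl fun i _ => ?_
    rw [hP, map_prod, ← Finset.mul_prod_erase Finset.univ (fun j => (starRingEnd ℂ) (z j))
      (Finset.mem_univ i)]
    have : (∏ j ∈ Finset.univ.erase i, (starRingEnd ℂ) (z j)) *
        ((a i : ℂ) * Complex.I * ∏ j ∈ Finset.univ.erase i, z j)
        = (a i : ℂ) * Complex.I * ∏ j ∈ Finset.univ.erase i, (z j * (starRingEnd ℂ) (z j)) := by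
      rw [Finset.prod_mul_distrib]
      ring
    rw [mul_assoc, this]
    rw [Finset.prod_congr rfl (fun j _ => hzconj j), ← Complex.ofReal_prod]
    have expand : (starRingEnd ℂ) (z i) * ((a i : ℂ) * Complex.I *
          ((∏ j ∈ Finset.univ.erase i, (1 + a j ^ 2) : ℝ) : ℂ))
        = (((a i) ^ 2 * ∏ j ∈ Finset.univ.erase i, (1 + a j ^ 2) : ℝ) : ℂ)
          + (((a i) * ∏ j ∈ Finset.univ.erase i, (1 + a j ^ 2) : ℝ) : ℂ) * Complex.I := by
      rw [hz]
      rw [show (starRingEnd ℂ) (1 + (a i : ℂ) * Complex.I) = 1 - (a i : ℂ) * Complex.I by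
        rw [map_add, map_one, map_mul, Complex.conj_ofReal, Complex.conj_I]; ring]
      push_cast
      ring_nf
      rw [Complex.I_sq]
      ring
    rw [expand, Complex.add_im, Complex.mul_I_im]
    simp only [Complex.ofReal_im, Complex.ofReal_re, zero_add]
  have im_eq2 : ((starRingEnd ℂ) P * Q).im
      = Xpoly n a * Yhat n a - Ypoly n a * Xhat n a := by
    rw [P_eq, Q_eq]
    simp only [map_add, map_mul, Complex.conj_ofReal, Complex.conj_I,
      Complex.mul_im, Complex.mul_re, Complex.add_im, Complex.add_re,
      Complex.ofReal_re, Complex.ofReal_im, Complex.I_re, Complex.I_im,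
      Complex.neg_re, Complex.neg_im, Complex.mul_I_im, Complex.mul_I_re]
    ring
  rw [← im_eq2, im_eq]
  have : Nonempty (Fin n) := ⟨⟨0, hn⟩⟩
  refine Finset.sum_pos (fun i _ => ?_) Finset.univ_nonempty
  exact mul_pos (ha i) (Finset.prod_pos fun j _ => by positivity)
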